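/- Let M be a left-cancellative monoid, P a generating set, and X a set of elements of M such that: (1) X is closed under left factors; (2) X with left divisibility is a Noetherian poset bounded above by some element of M; (3) whenever x ∈ X, y, z ∈ P, and xy, xz ∈ X, then y and z have a common right multiple m with xm ∈ X. Then X equals the set of left divisors of some element g of M. -/

import Mathlib

/-- Lemma 1.4 of the paper, in the monoid case: if `M` is a left-cancellative monoid generated by
`P`, and `X` is a nonempty set of elements of `M` which is stable by taking left factors, is
bounded above and Noetherian for left divisibility, and such that whenever `x ∈ X`, `y, z ∈ P`
with `x*y, x*z ∈ X` then `y` and `z` have a common right multiple `m` with `x*m ∈ X`, then `X`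
is the set of left divisors of some element `g` of `M`. -/
theorem stmt3 {M : Type*} [Monoid M]
    (hcancel : ∀ a b c : M, a * b = a * c → b = c)
    (P X : Set M) (hgen : Submonoid.closure P = ⊤)
    (hne : X.Nonempty)
    (hfac : ∀ x z : M, x * z ∈ X → x ∈ X)
    (hbdd : ∃ b : M, ∀ x ∈ X, ∃ z, b = x * z)
    (hNoeth : ¬ ∃ f : ℕ → M, (∀ n, f n ∈ X) ∧
      ∀ n, (∃ z, f (n + 1) = f n * z) ∧ f n ≠ f (n + 1))
    (hmul : ∀ x ∈ X, ∀ y ∈ P, ∀ z ∈ P, x * y ∈ X → x * z ∈ X →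
      ∃ m : M, (∃ u, m = y * u) ∧ (∃ u, m = z * u) ∧ x * m ∈ X) :
    ∃ g : M, X = {x : M | ∃ z, g = x * z} := by
  classical
  -- the strict divisibility relation inside X
  set r : M → M → Prop := fun a b => a ∈ X ∧ b ∈ X ∧ (∃ z, a = b * z) ∧ a ≠ b with hrdef
  have hword : ∀ y : M, ∃ l : List M, (∀ p ∈ l, p ∈ P) ∧ l.prod = y := by
    intro y
    exact Submonoid.exists_list_of_mem_closure (by rw [hgen]; trivial)
  have hwf : WellFounded r := by
    by_contra hw
    obtain ⟨a, ha⟩ : ∃ a, ¬ Acc r a := by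
      by_contra h; push_neg at h; exact hw ⟨h⟩
    have step : ∀ a : {a : M // ¬ Acc r a}, ∃ b : {a : M // ¬ Acc r a}, r b.1 a.1 := by
      rintro ⟨a, ha⟩
      by_contra h
      push_neg at h
      exact ha (Acc.intro a fun y hy => by_contra fun hy' => h ⟨y, hy'⟩ hy)
    choose F hF using step
    refine hNoeth ⟨fun n => (F^[n] ⟨a, ha⟩).1, ?_, ?_⟩
    · intro n
      exact (hF (F^[n] ⟨a, ha⟩)).2.1
    · intro n
      have h := hF (F^[n] ⟨a, ha⟩)
      simp only [Function.iterate_succ_apply']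
      exact ⟨h.2.2.1, fun he => h.2.2.2 he.symm⟩
  -- key: any two complements over x ∈ X have a common right multiple keeping us in X
  have key : ∀ x, x ∈ X → ∀ ly lz : List M, (∀ p ∈ ly, p ∈ P) → (∀ p ∈ lz, p ∈ P) →
      x * ly.prod ∈ X → x * lz.prod ∈ X →
      ∃ m, (∃ u, m = ly.prod * u) ∧ (∃ u, m = lz.prod * u) ∧ x * m ∈ X := by
    intro x
    induction x using hwf.induction with
    | _ x IHx =>
    intro hx
    suffices H : ∀ n (ly lz : List M), ly.length + lz.length = n →
        (∀ p ∈ ly, p ∈ P) → (∀ p ∈ lz, p ∈ P) →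
        x * ly.prod ∈ X → x * lz.prod ∈ X →
        ∃ m, (∃ u, m = ly.prod * u) ∧ (∃ u, m = lz.prod * u) ∧ x * m ∈ X by
      intro ly lz hly hlz h1 h2
      exact H _ ly lz rfl hly hlz h1 h2
    intro n
    induction n using Nat.strong_induction_on with
    | _ n IHn =>
    intro ly lz hlen hly hlz hxy hxz
    cases ly with
    | nil =>
      exact ⟨lz.prod, ⟨lz.prod, by simp⟩, ⟨1, by simp⟩, hxz⟩
    | cons p ly' =>
      cases lz with
      | nil =>
        exact ⟨(p :: ly').prod, ⟨1, by simp⟩, ⟨(p :: ly').prod, by simp⟩, hxy⟩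
      | cons q lz' =>
        simp only [List.length_cons] at hlen
        by_cases hp : p = 1
        · have hprod : (p :: ly').prod = ly'.prod := by simp [hp]
          obtain ⟨m, ⟨u, hu⟩, h2, h3⟩ := IHn (ly'.length + (q :: lz').length)
            (by simp only [List.length_cons]; omega) ly' (q :: lz') rfl
            (fun a hha => hly a (List.mem_cons_of_mem _ hha)) hlz
            (by rwa [← hprod]) hxz
          exact ⟨m, ⟨u, by rw [hu, hprod]⟩, h2, h3⟩
        · by_cases hq : q = 1
          · have hprod : (q :: lz').prod = lz'.prod := by simp [hq]
            obtain ⟨m, h1, ⟨u, hu⟩, h3⟩ := IHn ((p :: ly').length + lz'.length)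
              (by simp only [List.length_cons]; omega) (p :: ly') lz' rfl hly
              (fun a hha => hlz a (List.mem_cons_of_mem _ hha))
              hxy (by rwa [← hprod])
            exact ⟨m, h1, ⟨u, by rw [hu, hprod]⟩, h3⟩
          · have hxp : x * p ∈ X := hfac (x * p) ly'.prod
              (by rw [mul_assoc]; simpa [List.prod_cons] using hxy)
            have hxq : x * q ∈ X := hfac (x * q) lz'.prod
              (by rw [mul_assoc]; simpa [List.prod_cons] using hxz)
            obtain ⟨m₀, ⟨u, hu⟩, ⟨v, hv⟩, hxm₀⟩ :=
              hmul x hx p (hly p (List.mem_cons_self (a := p) (l := ly'))) q (hlz q (List.mem_cons_self (a := q) (l := lz')))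
                hxp hxq
            obtain ⟨lu, hluP, hluprod⟩ := hword u
            have hrp : r (x * p) x :=
              ⟨hxp, hx, ⟨p, rfl⟩, fun h => hp (hcancel x p 1 (by rw [h, mul_one]))⟩
            obtain ⟨m₁, ⟨s, hs⟩, ⟨w, hw⟩, hxpm₁⟩ := IHx (x * p) hrp hxp ly' lu
              (fun a hha => hly a (List.mem_cons_of_mem _ hha)) hluP
              (by rw [mul_assoc]; simpa [List.prod_cons] using hxy)
              (by rw [hluprod, mul_assoc, ← hu]; exact hxm₀)
            have e1 : u * w = m₁ := by rw [hw, hluprod]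
            have hxqvw : (x * q) * (v * w) ∈ X := by
              have he : (x * q) * (v * w) = (x * p) * m₁ := by
                rw [← e1]
                simp only [← mul_assoc]
                rw [mul_assoc x q v, ← hv, hu]
                simp only [← mul_assoc]
              rw [he]; exact hxpm₁
            obtain ⟨lvw, hlvwP, hlvwprod⟩ := hword (v * w)
            have hrq : r (x * q) x :=
              ⟨hxq, hx, ⟨q, rfl⟩, fun h => hq (hcancel x q 1 (by rw [h, mul_one]))⟩
            obtain ⟨m₂, ⟨s₂, hs₂⟩, ⟨w₂, hw₂⟩, hxqm₂⟩ := IHx (x * q) hrq hxq lz' lvw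
              (fun a hha => hlz a (List.mem_cons_of_mem _ hha)) hlvwP
              (by rw [mul_assoc]; simpa [List.prod_cons] using hxz)
              (by rw [hlvwprod]; exact hxqvw)
            refine ⟨q * m₂, ⟨s * w₂, ?_⟩, ⟨s₂, ?_⟩, ?_⟩
            · calc q * m₂ = q * v * (w * w₂) := by
                    rw [hw₂, hlvwprod]; simp only [mul_assoc]
                _ = p * u * (w * w₂) := by rw [← hv, hu]
                _ = p * (m₁ * w₂) := by rw [← e1]; simp only [mul_assoc]
                _ = (p :: ly').prod * (s * w₂) := by
                    rw [hs]; simp only [List.prod_cons, mul_assoc]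
            · rw [hs₂]; simp only [List.prod_cons, mul_assoc]
            · rw [← mul_assoc]; exact hxqm₂
  have h1X : (1 : M) ∈ X := by
    obtain ⟨a, ha⟩ := hne
    exact hfac 1 a (by simpa using ha)
  obtain ⟨g, hgX, hgmax⟩ := hwf.has_min X hne
  refine ⟨g, Set.ext fun x => ⟨fun hx => ?_, fun hx => ?_⟩⟩
  · obtain ⟨lx, hlxP, hlxprod⟩ := hword x
    obtain ⟨lg, hlgP, hlgprod⟩ := hword g
    obtain ⟨m, ⟨u, hu⟩, ⟨v, hv⟩, hmX⟩ := key 1 h1X lx lg hlxP hlgP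
      (by rw [one_mul, hlxprod]; exact hx) (by rw [one_mul, hlgprod]; exact hgX)
    have hmX' : m ∈ X := by rw [one_mul] at hmX; exact hmX
    have hmg : m = g := by
      by_contra hne'
      exact hgmax m hmX' ⟨hmX', hgX, ⟨v, by rw [hv, hlgprod]⟩, hne'⟩
    exact ⟨u, by rw [← hmg, hu, hlxprod]⟩
  · obtain ⟨z, hz⟩ := hx
    exact hfac x z (hz ▸ hgX)
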